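/- Let μ and ν be probability distributions on a finite set Ω and let X: Ω → [0,∞). Let p, q ∈ (1,∞) satisfy 1/p + 1/q = 1, and assume E_μ[X] ≥ E_ν[X] and E_μ[X^p] + E_ν[X^p] > 0. Then ‖μ − ν‖_TV ≥ (1/2)·(E_μ[X] − E_ν[X])^q / (E_μ[X^p] + E_ν[X^p])^{q−1}. -/

import Mathlib

open Finset

/-- Lower bound lemma (Lemma `p2`): for probability distributions `μ, ν` on a finite set
`Ω`, a nonnegative test function `X`, and conjugate exponents `p, q ∈ (1, ∞)`,
`‖μ - ν‖_TV ≥ (1/2) (E_μ[X] - E_ν[X])^q / (E_μ[X^p] + E_ν[X^p])^{q-1}`. -/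
theorem tv_lower_bound_moments {Ω : Type*} [Fintype Ω] (μ ν : Ω → ℝ)
    (hμ0 : ∀ ω, 0 ≤ μ ω) (hμ1 : ∑ ω, μ ω = 1)
    (hν0 : ∀ ω, 0 ≤ ν ω) (hν1 : ∑ ω, ν ω = 1)
    (X : Ω → ℝ) (hX : ∀ ω, 0 ≤ X ω)
    (p q : ℝ) (hp : 1 < p) (hq : 1 < q) (hpq : 1 / p + 1 / q = 1)
    (hE : ∑ ω, X ω * ν ω ≤ ∑ ω, X ω * μ ω)
    (hP : 0 < ∑ ω, X ω ^ p * μ ω + ∑ ω, X ω ^ p * ν ω) :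
    (1 / 2) * ((∑ ω, X ω * μ ω - ∑ ω, X ω * ν ω) ^ q /
        (∑ ω, X ω ^ p * μ ω + ∑ ω, X ω ^ p * ν ω) ^ (q - 1)) ≤
      (1 / 2) * ∑ ω, |μ ω - ν ω| := by
  have hp0 : (0:ℝ) < p := by linarith
  have hq0 : (0:ℝ) < q := by linarith
  set D : ℝ := ∑ ω, X ω * μ ω - ∑ ω, X ω * ν ω with hD
  set M : ℝ := ∑ ω, X ω ^ p * μ ω + ∑ ω, X ω ^ p * ν ω with hM
  set T : ℝ := ∑ ω, |μ ω - ν ω| with hT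
  have hD0 : 0 ≤ D := by simp [hD]; linarith
  have hT0 : 0 ≤ T := sum_nonneg fun ω _ => abs_nonneg _
  have hconj : p.HolderConjugate q := Real.holderConjugate_iff.mpr ⟨hp, by simpa [one_div] using hpq⟩
  -- Step 1: D ≤ Σ X |μ-ν|
  have step1 : D ≤ ∑ ω, X ω * |μ ω - ν ω| := by
    rw [hD, ← Finset.sum_sub_distrib]
    apply sum_le_sum
    intro ω _
    rw [← mul_sub]
    exact mul_le_mul_of_nonneg_left (le_abs_self _) (hX ω)
  -- Step 2: Hölder
  have step2 : ∑ ω, X ω * |μ ω - ν ω| ≤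
      (∑ ω, X ω ^ p * |μ ω - ν ω|) ^ (1/p) * T ^ (1/q) := by
    have h := Real.inner_le_Lp_mul_Lq_of_nonneg (Finset.univ)
      (f := fun ω => X ω * |μ ω - ν ω| ^ (1/p))
      (g := fun ω => |μ ω - ν ω| ^ (1/q)) hconj
      (fun ω _ => mul_nonneg (hX ω) (Real.rpow_nonneg (abs_nonneg _) _))
      (fun ω _ => Real.rpow_nonneg (abs_nonneg _) _)
    have e1 : ∀ ω : Ω, X ω * |μ ω - ν ω| ^ (1/p) * |μ ω - ν ω| ^ (1/q)
        = X ω * |μ ω - ν ω| := by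
      intro ω
      rw [mul_assoc, ← Real.rpow_add' (abs_nonneg _) (by rw [hpq]; norm_num), hpq,
        Real.rpow_one]
    have e2 : ∀ ω : Ω, (X ω * |μ ω - ν ω| ^ (1/p)) ^ p = X ω ^ p * |μ ω - ν ω| := by
      intro ω
      rw [Real.mul_rpow (hX ω) (Real.rpow_nonneg (abs_nonneg _) _),
        ← Real.rpow_mul (abs_nonneg _), one_div, inv_mul_cancel₀ (ne_of_gt hp0),
        Real.rpow_one]
    have e3 : ∀ ω : Ω, (|μ ω - ν ω| ^ (1/q)) ^ q = |μ ω - ν ω| := by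
      intro ω
      rw [← Real.rpow_mul (abs_nonneg _), one_div, inv_mul_cancel₀ (ne_of_gt hq0),
        Real.rpow_one]
    simp only [e1, e2, e3] at h
    exact h
  -- Step 3: Σ X^p |μ-ν| ≤ M
  have step3 : ∑ ω, X ω ^ p * |μ ω - ν ω| ≤ M := by
    rw [hM, ← Finset.sum_add_distrib]
    apply sum_le_sum
    intro ω _
    rw [← mul_add]
    refine mul_le_mul_of_nonneg_left ?_ (Real.rpow_nonneg (hX ω) _)
    calc |μ ω - ν ω| ≤ |μ ω| + |ν ω| := abs_sub _ _
      _ = μ ω + ν ω := by rw [abs_of_nonneg (hμ0 ω), abs_of_nonneg (hν0 ω)]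
  have hM0 : 0 ≤ M := le_of_lt hP
  have hXabs0 : 0 ≤ ∑ ω, X ω ^ p * |μ ω - ν ω| :=
    sum_nonneg fun ω _ => mul_nonneg (Real.rpow_nonneg (hX ω) _) (abs_nonneg _)
  -- combine: D ≤ M^{1/p} T^{1/q}
  have key : D ≤ M ^ (1/p) * T ^ (1/q) := by
    refine le_trans step1 (le_trans step2 ?_)
    gcongr
  -- D^q ≤ M^{q-1} * T
  have hqp : q * (1/p) = q - 1 := by
    have h1 : (1:ℝ)/p = 1 - 1/q := by linarith
    rw [h1, mul_sub, mul_one, mul_one_div, div_self (ne_of_gt hq0)]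
  have pow : D ^ q ≤ M ^ (q - 1) * T := by
    calc D ^ q ≤ (M ^ (1/p) * T ^ (1/q)) ^ q := Real.rpow_le_rpow hD0 key (le_of_lt hq0)
      _ = (M ^ (1/p)) ^ q * (T ^ (1/q)) ^ q := Real.mul_rpow (Real.rpow_nonneg hM0 _) (Real.rpow_nonneg hT0 _)
      _ = M ^ (q - 1) * T := by
          rw [← Real.rpow_mul hM0, ← Real.rpow_mul hT0, mul_comm (1/p) q, hqp,
            one_div, inv_mul_cancel₀ (ne_of_gt hq0), Real.rpow_one]
  have hMq : 0 < M ^ (q - 1) := Real.rpow_pos_of_pos hP _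
  have final : D ^ q / M ^ (q - 1) ≤ T := by
    rw [div_le_iff₀ hMq, mul_comm]
    exact pow
  linarith
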